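/- Let v be a vector in the left kernel of Iᵀ (i.e., v·I = 0 over GF(2)) where R·I = I·Cᵀ and Rˡ = 1. Then the vector w = (∑_{i=0}^{l-1} (Rᵀ)ⁱ) v satisfies both w·I = 0 and (1+Rᵀ)·w = 0. -/

import Mathlib

open Matrix Finset

def IsPermMatrix {k : ℕ} (M : Matrix (Fin k) (Fin k) (ZMod 2)) : Prop :=
  ∃ σ : Equiv.Perm (Fin k), M = σ.permMatrix (ZMod 2)

/-- If `v·I = 0`, `R·I = I·Cᵀ` and `Rˡ = 1`, then
`w = (∑_{i<l} (Rᵀ)ⁱ) v` satisfies `w·I = 0` and `(1+Rᵀ)·w = 0`. -/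
theorem symmetrised_null_vector
    {m n : ℕ} (I : Matrix (Fin m) (Fin n) (ZMod 2))
    (R : Matrix (Fin m) (Fin m) (ZMod 2)) (C : Matrix (Fin n) (Fin n) (ZMod 2))
    (hR : IsPermMatrix R) (hC : IsPermMatrix C)
    (hsym : R * I = I * Cᵀ) (l : ℕ) (hl : R ^ l = 1)
    (v : Fin m → ZMod 2) (hv : v ᵥ* I = 0) :
    ((∑ i ∈ range l, (Rᵀ) ^ i) *ᵥ v) ᵥ* I = 0 ∧
      (1 + Rᵀ) *ᵥ ((∑ i ∈ range l, (Rᵀ) ^ i) *ᵥ v) = 0 := by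
  have key : ∀ i : ℕ, R ^ i * I = I * (Cᵀ) ^ i := by
    intro i
    induction i with
    | zero => simp
    | succ k ih =>
      rw [pow_succ', Matrix.mul_assoc, ih, ← Matrix.mul_assoc, hsym, Matrix.mul_assoc, ← pow_succ']
  set S := ∑ i ∈ range l, (Rᵀ) ^ i with hS
  have hSt : Sᵀ = ∑ i ∈ range l, R ^ i := by
    rw [hS, transpose_sum]
    refine Finset.sum_congr rfl fun i _ => by rw [transpose_pow, transpose_transpose]
  constructor
  · have h1 : S *ᵥ v = v ᵥ* Sᵀ := by
      rw [← mulVec_transpose, transpose_transpose]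
    rw [h1, vecMul_vecMul, hSt]
    have : ∑ i ∈ range l, R ^ i * I = I * ∑ i ∈ range l, (Cᵀ) ^ i := by
      rw [Matrix.mul_sum]
      exact Finset.sum_congr rfl fun i _ => key i
    rw [Matrix.sum_mul, this, ← vecMul_vecMul, hv, zero_vecMul]
  · rw [mulVec_mulVec]
    have h2 : (1 + Rᵀ) * S = 0 := by
      have hgeom : (Rᵀ - 1) * S = (Rᵀ) ^ l - 1 := mul_geom_sum (Rᵀ) l
      have hRl : (Rᵀ) ^ l = 1 := by rw [← transpose_pow, hl, transpose_one]
      have hneg : (1 : Matrix (Fin m) (Fin m) (ZMod 2)) = -1 := by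
        ext i j
        simp [Matrix.one_apply]
      have heq : Rᵀ - 1 = 1 + Rᵀ := by
        rw [sub_eq_add_neg, ← hneg, add_comm]
      rw [← heq, hgeom, hRl, sub_self]
    rw [h2, zero_mulVec]
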